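/- The linear map Π := −s⁺∘s⁻ on 𝒩 is an idempotent (Π∘Π = Π), it equals −s⁻∘s⁺, it satisfies Π(x) = x for every x ∈ Λ*E and Π(K·x) = 0 for every x ∈ Λ*E; hence the image of Π is Λ*E and the kernel of Π is K·Λ*E = span{K, Kθ, Kθ̄, Kρ}. -/
import Mathlib


noncomputable section

open TensorProduct

/-- The quadratic form `q(x₀,x₁,x₂) = x₀²` on `ℝ³`. -/
def Nform : QuadraticForm ℝ (Fin 3 → ℝ) :=
  QuadraticMap.weightedSumSquares ℝ (fun i : Fin 3 => if i = 0 then (1 : ℝ) else 0)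

/-- The algebra `𝒩 = ℤ/2 ⋉ Λ*ℝ²`, realized as the Clifford algebra of `Nform`. -/
abbrev NA := CliffordAlgebra Nform

/-- The generator `K`. -/
def K : NA := CliffordAlgebra.ι Nform (Pi.single 0 1)

/-- The generator `θ`. -/
def θ : NA := CliffordAlgebra.ι Nform (Pi.single 1 1)

/-- The generator `θ̄`. -/
def θb : NA := CliffordAlgebra.ι Nform (Pi.single 2 1)

/-- `ρ := θ̄θ`. -/
def ρ : NA := θb * θ

/-- `ℳ⁺ := 1⊗1 + (Kθ̄⊗θ + θK⊗θ̄) − ρ⊗ρ`. -/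
def MonoP : NA ⊗[ℝ] NA := 1 + (K * θb) ⊗ₜ[ℝ] θ + (θ * K) ⊗ₜ[ℝ] θb - ρ ⊗ₜ[ℝ] ρ

/-- `ℳ⁻ := 1⊗1 − (Kθ̄⊗θ + θK⊗θ̄) − ρ⊗ρ`. -/
def MonoM : NA ⊗[ℝ] NA := 1 - (K * θb) ⊗ₜ[ℝ] θ - (θ * K) ⊗ₜ[ℝ] θb - ρ ⊗ₜ[ℝ] ρ

/-- `Λ*E`, the subalgebra of `𝒩` spanned by `1, θ, θ̄, ρ`. -/
def ΛE : Submodule ℝ NA := Submodule.span ℝ {1, θ, θb, ρ}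

/-- Given the functional `μ₀`, the antipode `S` and an element `m = Σ_j m_j ⊗ n_j` of
`𝒩⊗𝒩`, this is the map `x ↦ Σ_j μ₀(S(x)·m_j)·n_j` (expressed basis-freely). -/
def sMap (μ₀ : NA →ₗ[ℝ] ℝ) (S : NA →ₗ[ℝ] NA) (m : NA ⊗[ℝ] NA) (x : NA) : NA :=
  (TensorProduct.lid ℝ NA)
    (LinearMap.rTensor NA (μ₀ ∘ₗ LinearMap.mulLeft ℝ (S x)) m)

lemma Nform_apply (v : Fin 3 → ℝ) : Nform v = v 0 * v 0 := by
  simp [Nform, Fin.sum_univ_three]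

lemma K_mul_K : K * K = 1 := by
  rw [K, CliffordAlgebra.ι_sq_scalar, Nform_apply]
  simp

lemma θ_mul_θ : θ * θ = 0 := by
  rw [θ, CliffordAlgebra.ι_sq_scalar, Nform_apply]
  simp

lemma θb_mul_θb : θb * θb = 0 := by
  rw [θb, CliffordAlgebra.ι_sq_scalar, Nform_apply]
  simp

lemma ortho12 (i j : Fin 3) (h : i ≠ j) :
    Nform.IsOrtho (Pi.single i 1) (Pi.single j 1) := by
  rw [QuadraticMap.isOrtho_def]
  fin_cases i <;> fin_cases j <;> simp_all [Nform_apply, Pi.single_apply]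

lemma θ_mul_K : θ * K = -(K * θ) := by
  rw [θ, K, CliffordAlgebra.ι_mul_ι_comm_of_isOrtho (ortho12 1 0 (by decide))]

lemma θb_mul_K : θb * K = -(K * θb) := by
  rw [θb, K, CliffordAlgebra.ι_mul_ι_comm_of_isOrtho (ortho12 2 0 (by decide))]

lemma θb_mul_θ : θb * θ = -(θ * θb) := by
  rw [θb, θ, CliffordAlgebra.ι_mul_ι_comm_of_isOrtho (ortho12 2 1 (by decide))]

lemma K_mul_K' (x : NA) : K * (K * x) = x := by rw [← mul_assoc, K_mul_K, one_mul]
lemma θ_mul_θ' (x : NA) : θ * (θ * x) = 0 := by rw [← mul_assoc, θ_mul_θ, zero_mul]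
lemma θb_mul_θb' (x : NA) : θb * (θb * x) = 0 := by rw [← mul_assoc, θb_mul_θb, zero_mul]
lemma θ_mul_K' (x : NA) : θ * (K * x) = -(K * (θ * x)) := by
  rw [← mul_assoc, θ_mul_K, neg_mul, mul_assoc]
lemma θb_mul_K' (x : NA) : θb * (K * x) = -(K * (θb * x)) := by
  rw [← mul_assoc, θb_mul_K, neg_mul, mul_assoc]
lemma θb_mul_θ' (x : NA) : θb * (θ * x) = -(θ * (θb * x)) := by
  rw [← mul_assoc, θb_mul_θ, neg_mul, mul_assoc]

lemma rho_eq : ρ = -(θ * θb) := by rw [ρ, θb_mul_θ]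


set_option synthInstance.maxHeartbeats 1000000 in
lemma sMap_MonoP (μ₀ : NA →ₗ[ℝ] ℝ) (S : NA →ₗ[ℝ] NA) (x : NA) :
    sMap μ₀ S MonoP x = μ₀ (S x) • (1 : NA) + μ₀ (S x * (K * θb)) • θ
      + μ₀ (S x * (θ * K)) • θb - μ₀ (S x * ρ) • ρ := by
  simp only [sMap, MonoP, Algebra.TensorProduct.one_def, map_add, map_sub,
    LinearMap.rTensor_tmul, TensorProduct.lid_tmul, LinearMap.coe_comp,
    Function.comp_apply, LinearMap.mulLeft_apply, mul_one]

set_option synthInstance.maxHeartbeats 1000000 in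
lemma sMap_MonoM (μ₀ : NA →ₗ[ℝ] ℝ) (S : NA →ₗ[ℝ] NA) (x : NA) :
    sMap μ₀ S MonoM x = μ₀ (S x) • (1 : NA) - μ₀ (S x * (K * θb)) • θ
      - μ₀ (S x * (θ * K)) • θb - μ₀ (S x * ρ) • ρ := by
  simp only [sMap, MonoM, Algebra.TensorProduct.one_def, map_add, map_sub,
    LinearMap.rTensor_tmul, TensorProduct.lid_tmul, LinearMap.coe_comp,
    Function.comp_apply, LinearMap.mulLeft_apply, mul_one]

section
variable (S : NA →ₗ[ℝ] NA) (hS1 : S 1 = 1) (hSmul : ∀ x y : NA, S (x * y) = S y * S x)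
    (hSK : S K = K) (hSθ : S θ = -(K * θ)) (hSθb : S θb = -(K * θb))
    (μ₀ : NA →ₗ[ℝ] ℝ)
    (hμ1 : μ₀ 1 = 0) (hμθ : μ₀ θ = 0) (hμθb : μ₀ θb = 0) (hμρ : μ₀ ρ = 1)
    (hμK : μ₀ K = 0) (hμKθ : μ₀ (K * θ) = 0) (hμKθb : μ₀ (K * θb) = 0)
    (hμKρ : μ₀ (K * ρ) = 0)

include hSmul hSθ hSθb in
lemma hSρ : S ρ = ρ := by
  rw [ρ, hSmul, hSθ, hSθb]
  simp [mul_assoc, K_mul_K', θ_mul_θ', θb_mul_θb', θ_mul_K', θb_mul_K', θb_mul_θ',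
    K_mul_K, θ_mul_θ, θb_mul_θb, θ_mul_K, θb_mul_K, θb_mul_θ]

include hμρ in
lemma hμθθb : μ₀ (θ * θb) = -1 := by
  have h := hμρ; rw [rho_eq, map_neg] at h; linarith

include hμKρ in
lemma hμKθθb : μ₀ (K * (θ * θb)) = 0 := by
  have h := hμKρ
  rw [rho_eq, mul_neg, map_neg] at h; linarith

include hS1 hSmul hSθ hSθb hμ1 hμθ hμθb hμρ hμK hμKθ hμKθb hμKρ in
lemma Pr_formula (x : NA) :
    -(sMap μ₀ S MonoP (sMap μ₀ S MonoM x)) =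
      μ₀ (S x * ρ) • (1 : NA) - μ₀ (S x * (K * θb)) • θ - μ₀ (S x * (θ * K)) • θb
        + μ₀ (S x) • ρ := by
  rw [sMap_MonoM, sMap_MonoP]
  simp only [map_sub, map_smul, hS1, hSθ, hSθb, hSρ S hSmul hSθ hSθb]
  simp only [sub_mul, add_mul, smul_mul_assoc, neg_mul, mul_neg, one_mul, mul_one,
    rho_eq, neg_neg, smul_neg,
    mul_assoc, K_mul_K', θ_mul_θ', θb_mul_θb', θ_mul_K', θb_mul_K', θb_mul_θ',
    K_mul_K, θ_mul_θ, θb_mul_θb, θ_mul_K, θb_mul_K, θb_mul_θ,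
    mul_zero, zero_mul, smul_zero, neg_zero, sub_zero, zero_sub, add_zero, zero_add,
    map_add, map_sub, map_neg, map_smul,
    hμ1, hμθ, hμθb, hμK, hμKθ, hμKθb, hμθθb μ₀ hμρ, hμKθθb μ₀ hμKρ, smul_eq_mul]
  module

include hS1 hSmul hSθ hSθb hμ1 hμθ hμθb hμρ hμK hμKθ hμKθb hμKρ in
lemma Pr_formula2 (x : NA) :
    -(sMap μ₀ S MonoM (sMap μ₀ S MonoP x)) =
      μ₀ (S x * ρ) • (1 : NA) - μ₀ (S x * (K * θb)) • θ - μ₀ (S x * (θ * K)) • θb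
        + μ₀ (S x) • ρ := by
  rw [sMap_MonoP, sMap_MonoM]
  simp only [map_add, map_sub, map_smul, hS1, hSθ, hSθb, hSρ S hSmul hSθ hSθb]
  simp only [sub_mul, add_mul, smul_mul_assoc, neg_mul, mul_neg, one_mul, mul_one,
    rho_eq, neg_neg, smul_neg,
    mul_assoc, K_mul_K', θ_mul_θ', θb_mul_θb', θ_mul_K', θb_mul_K', θb_mul_θ',
    K_mul_K, θ_mul_θ, θb_mul_θb, θ_mul_K, θb_mul_K, θb_mul_θ,
    mul_zero, zero_mul, smul_zero, neg_zero, sub_zero, zero_sub, add_zero, zero_add,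
    map_add, map_sub, map_neg, map_smul,
    hμ1, hμθ, hμθb, hμK, hμKθ, hμKθb, hμθθb μ₀ hμρ, hμKθθb μ₀ hμKρ, smul_eq_mul]
  module
end

abbrev NCset : Set NA := {1, θ, θb, ρ, K, K * θ, K * θb, K * ρ}

set_option maxHeartbeats 2000000 in
lemma span_top : Submodule.span ℝ NCset = ⊤ := by
  rw [eq_top_iff]
  rintro x -
  have h1 : (1 : NA) ∈ Submodule.span ℝ NCset := Submodule.subset_span (by simp [NCset])
  have hθm : θ ∈ Submodule.span ℝ NCset := Submodule.subset_span (by simp [NCset])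
  have hθbm : θb ∈ Submodule.span ℝ NCset := Submodule.subset_span (by simp [NCset])
  have hρm : ρ ∈ Submodule.span ℝ NCset := Submodule.subset_span (by simp [NCset])
  have hKm : K ∈ Submodule.span ℝ NCset := Submodule.subset_span (by simp [NCset])
  have hKθm : K * θ ∈ Submodule.span ℝ NCset := Submodule.subset_span (by simp [NCset])
  have hKθbm : K * θb ∈ Submodule.span ℝ NCset := Submodule.subset_span (by simp [NCset])
  have hKρm : K * ρ ∈ Submodule.span ℝ NCset := Submodule.subset_span (by simp [NCset])
  have hθθb : θ * θb ∈ Submodule.span ℝ NCset := by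
    have : θ * θb = -ρ := by rw [rho_eq, neg_neg]
    rw [this]; exact neg_mem hρm
  have hKθθb : K * (θ * θb) ∈ Submodule.span ℝ NCset := by
    have : K * (θ * θb) = -(K * ρ) := by rw [rho_eq, mul_neg, neg_neg]
    rw [this]; exact neg_mem hKρm
  induction x using CliffordAlgebra.induction with
  | algebraMap r =>
      rw [Algebra.algebraMap_eq_smul_one]
      exact Submodule.smul_mem _ _ h1
  | ι v =>
      have hv : v = v 0 • (Pi.single 0 1 : Fin 3 → ℝ) + v 1 • (Pi.single 1 1 : Fin 3 → ℝ) + v 2 • (Pi.single 2 1 : Fin 3 → ℝ) := by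
        ext i; fin_cases i <;> simp [Pi.single_apply]
      rw [hv, map_add, map_add, map_smul, map_smul, map_smul]
      exact add_mem (add_mem (Submodule.smul_mem _ _ hKm) (Submodule.smul_mem _ _ hθm))
        (Submodule.smul_mem _ _ hθbm)
  | mul a b ha hb =>
      induction ha using Submodule.span_induction with
      | mem a hagen =>
          induction hb using Submodule.span_induction with
          | mem b hbgen =>
              rcases hagen with rfl|rfl|rfl|rfl|rfl|rfl|rfl|rfl <;>
                rcases hbgen with rfl|rfl|rfl|rfl|rfl|rfl|rfl|rfl <;>
                (try simp only [rho_eq, mul_assoc, neg_mul, mul_neg, neg_neg, one_mul, mul_one,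
                  K_mul_K', θ_mul_θ', θb_mul_θb', θ_mul_K', θb_mul_K', θb_mul_θ',
                  K_mul_K, θ_mul_θ, θb_mul_θb, θ_mul_K, θb_mul_K, θb_mul_θ,
                  mul_zero, zero_mul, neg_zero]) <;>
                first
                  | exact zero_mem _
                  | exact h1 | exact hθm | exact hθbm | exact hKm
                  | exact hKθm | exact hKθbm | exact hθθb | exact hKθθb
                  | exact neg_mem h1 | exact neg_mem hθm | exact neg_mem hθbm
                  | exact neg_mem hKm | exact neg_mem hKθm | exact neg_mem hKθbm
                  | exact neg_mem hθθb | exact neg_mem hKθθb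
          | zero => rw [mul_zero]; exact zero_mem _
          | add x y hx hy hx' hy' => rw [mul_add]; exact add_mem hx' hy'
          | smul r x hx hx' => rw [mul_smul_comm]; exact Submodule.smul_mem _ _ hx'
      | zero => rw [zero_mul]; exact zero_mem _
      | add x y hx hy hx' hy' => rw [add_mul]; exact add_mem hx' hy'
      | smul r x hx hx' => rw [smul_mul_assoc]; exact Submodule.smul_mem _ _ hx'
  | add a b ha hb => exact add_mem ha hb

def Fmap (S : NA →ₗ[ℝ] NA) (μ₀ : NA →ₗ[ℝ] ℝ) : NA →ₗ[ℝ] NA where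
  toFun x := μ₀ (S x * ρ) • (1 : NA) - μ₀ (S x * (K * θb)) • θ - μ₀ (S x * (θ * K)) • θb
      + μ₀ (S x) • ρ
  map_add' x y := by
    simp only [map_add, add_mul, add_smul]
    module
  map_smul' r x := by
    simp only [map_smul, smul_mul_assoc, RingHom.id_apply, smul_eq_mul, mul_smul]
    module

section
variable (S : NA →ₗ[ℝ] NA) (hS1 : S 1 = 1) (hSmul : ∀ x y : NA, S (x * y) = S y * S x)
    (hSK : S K = K) (hSθ : S θ = -(K * θ)) (hSθb : S θb = -(K * θb))
    (μ₀ : NA →ₗ[ℝ] ℝ)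
    (hμ1 : μ₀ 1 = 0) (hμθ : μ₀ θ = 0) (hμθb : μ₀ θb = 0) (hμρ : μ₀ ρ = 1)
    (hμK : μ₀ K = 0) (hμKθ : μ₀ (K * θ) = 0) (hμKθb : μ₀ (K * θb) = 0)
    (hμKρ : μ₀ (K * ρ) = 0)

set_option linter.unusedSectionVars false
include hS1 hSmul hSK hSθ hSθb hμ1 hμθ hμθb hμρ hμK hμKθ hμKθb hμKρ

lemma hSKθ : S (K * θ) = θ := by
  rw [hSmul, hSθ, hSK]
  simp [mul_assoc, K_mul_K', θ_mul_θ', θb_mul_θb', θ_mul_K', θb_mul_K', θb_mul_θ',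
    K_mul_K, θ_mul_θ, θb_mul_θb, θ_mul_K, θb_mul_K, θb_mul_θ]

lemma hSKθb : S (K * θb) = θb := by
  rw [hSmul, hSθb, hSK]
  simp [mul_assoc, K_mul_K', θ_mul_θ', θb_mul_θb', θ_mul_K', θb_mul_K', θb_mul_θ',
    K_mul_K, θ_mul_θ, θb_mul_θb, θ_mul_K, θb_mul_K, θb_mul_θ]

lemma hSKρ : S (K * ρ) = K * ρ := by
  rw [hSmul, hSρ S hSmul hSθ hSθb, hSK, rho_eq]
  simp [mul_assoc, K_mul_K', θ_mul_θ', θb_mul_θb', θ_mul_K', θb_mul_K', θb_mul_θ',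
    K_mul_K, θ_mul_θ, θb_mul_θb, θ_mul_K, θb_mul_K, θb_mul_θ]

lemma Fmap_one : Fmap S μ₀ 1 = 1 := by
  simp only [Fmap, LinearMap.coe_mk, AddHom.coe_mk, hS1, one_mul, rho_eq]
  simp [θ_mul_K, hμ1, hμKθ, hμθθb μ₀ hμρ, hμKθθb μ₀ hμKρ, hμKθb]

lemma Fmap_θ : Fmap S μ₀ θ = θ := by
  simp only [Fmap, LinearMap.coe_mk, AddHom.coe_mk, hSθ, rho_eq]
  simp only [neg_mul, mul_neg, map_neg, neg_neg,
    mul_assoc, K_mul_K', θ_mul_θ', θb_mul_θb', θ_mul_K', θb_mul_K', θb_mul_θ',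
    K_mul_K, θ_mul_θ, θb_mul_θb, θ_mul_K, θb_mul_K, θb_mul_θ,
    mul_zero, zero_mul, map_zero, neg_zero, mul_one]
  simp [hμθθb μ₀ hμρ, hμKθθb μ₀ hμKρ, hμKθ]

lemma Fmap_θb : Fmap S μ₀ θb = θb := by
  simp only [Fmap, LinearMap.coe_mk, AddHom.coe_mk, hSθb, rho_eq]
  simp only [neg_mul, mul_neg, map_neg, neg_neg,
    mul_assoc, K_mul_K', θ_mul_θ', θb_mul_θb', θ_mul_K', θb_mul_K', θb_mul_θ',
    K_mul_K, θ_mul_θ, θb_mul_θb, θ_mul_K, θb_mul_K, θb_mul_θ,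
    mul_zero, zero_mul, map_zero, neg_zero, mul_one]
  simp [hμθθb μ₀ hμρ, hμKθθb μ₀ hμKρ, hμKθb]

lemma Fmap_ρ : Fmap S μ₀ ρ = ρ := by
  simp only [Fmap, LinearMap.coe_mk, AddHom.coe_mk, hSρ S hSmul hSθ hSθb]
  simp only [rho_eq, neg_mul, mul_neg, map_neg, neg_neg,
    mul_assoc, K_mul_K', θ_mul_θ', θb_mul_θb', θ_mul_K', θb_mul_K', θb_mul_θ',
    K_mul_K, θ_mul_θ, θb_mul_θb, θ_mul_K, θb_mul_K, θb_mul_θ,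
    mul_zero, zero_mul, map_zero, neg_zero, mul_one]
  simp [hμθθb μ₀ hμρ, hμKθθb μ₀ hμKρ]

lemma Fmap_K : Fmap S μ₀ K = 0 := by
  simp only [Fmap, LinearMap.coe_mk, AddHom.coe_mk, hSK]
  simp only [rho_eq, neg_mul, mul_neg, map_neg, neg_neg,
    mul_assoc, K_mul_K', θ_mul_θ', θb_mul_θb', θ_mul_K', θb_mul_K', θb_mul_θ',
    K_mul_K, θ_mul_θ, θb_mul_θb, θ_mul_K, θb_mul_K, θb_mul_θ,
    mul_zero, zero_mul, map_zero, neg_zero, mul_one]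
  simp [hμθ, hμθb, hμK, hμKθθb μ₀ hμKρ]

lemma Fmap_Kθ : Fmap S μ₀ (K * θ) = 0 := by
  have hs : S (K * θ) = θ := hSKθ S hS1 hSmul hSK hSθ hSθb μ₀ hμ1 hμθ hμθb hμρ hμK hμKθ hμKθb hμKρ
  simp only [Fmap, LinearMap.coe_mk, AddHom.coe_mk, hs]
  simp only [rho_eq, neg_mul, mul_neg, map_neg, neg_neg,
    mul_assoc, K_mul_K', θ_mul_θ', θb_mul_θb', θ_mul_K', θb_mul_K', θb_mul_θ',
    K_mul_K, θ_mul_θ, θb_mul_θb, θ_mul_K, θb_mul_K, θb_mul_θ,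
    mul_zero, zero_mul, map_zero, neg_zero, mul_one]
  simp [rho_eq, hμθ, hμKθθb μ₀ hμKρ, mul_assoc, K_mul_K', θ_mul_θ', θb_mul_θb', θ_mul_K', θb_mul_K', θb_mul_θ',
    K_mul_K, θ_mul_θ, θb_mul_θb, θ_mul_K, θb_mul_K, θb_mul_θ]

lemma Fmap_Kθb : Fmap S μ₀ (K * θb) = 0 := by
  have hs : S (K * θb) = θb := hSKθb S hS1 hSmul hSK hSθ hSθb μ₀ hμ1 hμθ hμθb hμρ hμK hμKθ hμKθb hμKρ
  simp only [Fmap, LinearMap.coe_mk, AddHom.coe_mk, hs]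
  simp only [rho_eq, neg_mul, mul_neg, map_neg, neg_neg,
    mul_assoc, K_mul_K', θ_mul_θ', θb_mul_θb', θ_mul_K', θb_mul_K', θb_mul_θ',
    K_mul_K, θ_mul_θ, θb_mul_θb, θ_mul_K, θb_mul_K, θb_mul_θ,
    mul_zero, zero_mul, map_zero, neg_zero, mul_one]
  simp [rho_eq, hμθb, hμKθθb μ₀ hμKρ, mul_assoc, K_mul_K', θ_mul_θ', θb_mul_θb', θ_mul_K', θb_mul_K', θb_mul_θ',
    K_mul_K, θ_mul_θ, θb_mul_θb, θ_mul_K, θb_mul_K, θb_mul_θ]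

lemma Fmap_Kρ : Fmap S μ₀ (K * ρ) = 0 := by
  have hs : S (K * ρ) = K * ρ := hSKρ S hS1 hSmul hSK hSθ hSθb μ₀ hμ1 hμθ hμθb hμρ hμK hμKθ hμKθb hμKρ
  simp only [Fmap, LinearMap.coe_mk, AddHom.coe_mk, hs]
  simp only [rho_eq, neg_mul, mul_neg, map_neg, neg_neg,
    mul_assoc, K_mul_K', θ_mul_θ', θb_mul_θb', θ_mul_K', θb_mul_K', θb_mul_θ',
    K_mul_K, θ_mul_θ, θb_mul_θb, θ_mul_K, θb_mul_K, θb_mul_θ,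
    mul_zero, zero_mul, map_zero, neg_zero, mul_one]
  simp [rho_eq, hμK, hμKθθb μ₀ hμKρ, mul_assoc, K_mul_K', θ_mul_θ', θb_mul_θb', θ_mul_K', θb_mul_K', θb_mul_θ',
    K_mul_K, θ_mul_θ, θb_mul_θb, θ_mul_K, θb_mul_K, θb_mul_θ]
end


set_option maxHeartbeats 1000000 in
/-- the map `Pr := −s⁺∘s⁻` is idempotent, equals `−s⁻∘s⁺`, fixes every
element of `Λ*E` and kills `K·Λ*E`; its image is `Λ*E` and its kernel is
`K·Λ*E = span{K, Kθ, Kθ̄, Kρ}`. -/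
theorem stmt12
    (S : NA →ₗ[ℝ] NA) (hS1 : S 1 = 1) (hSmul : ∀ x y : NA, S (x * y) = S y * S x)
    (hSK : S K = K) (hSθ : S θ = -(K * θ)) (hSθb : S θb = -(K * θb))
    (μ₀ : NA →ₗ[ℝ] ℝ)
    (hμ1 : μ₀ 1 = 0) (hμθ : μ₀ θ = 0) (hμθb : μ₀ θb = 0) (hμρ : μ₀ ρ = 1)
    (hμK : μ₀ K = 0) (hμKθ : μ₀ (K * θ) = 0) (hμKθb : μ₀ (K * θb) = 0)
    (hμKρ : μ₀ (K * ρ) = 0) :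
    ∀ Pr : NA → NA,
      Pr = (fun x => -(sMap μ₀ S MonoP (sMap μ₀ S MonoM x))) →
      (∀ x : NA, Pr (Pr x) = Pr x) ∧
      (∀ x : NA, Pr x = -(sMap μ₀ S MonoM (sMap μ₀ S MonoP x))) ∧
      (∀ x ∈ ΛE, Pr x = x) ∧
      (∀ x ∈ ΛE, Pr (K * x) = 0) ∧
      Set.range Pr = (ΛE : Set NA) ∧
      {x : NA | Pr x = 0} = (Submodule.span ℝ {K, K * θ, K * θb, K * ρ} : Set NA) := by
  intro Pr hPr
  have hF : ∀ x, Pr x = Fmap S μ₀ x := by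
    intro x
    rw [hPr]
    dsimp only
    rw [Pr_formula S hS1 hSmul hSθ hSθb μ₀ hμ1 hμθ hμθb hμρ hμK hμKθ hμKθb hμKρ x]
    rfl
  have hmem : ∀ x, Fmap S μ₀ x ∈ ΛE := by
    intro x
    simp only [Fmap, LinearMap.coe_mk, AddHom.coe_mk]
    exact add_mem (sub_mem (sub_mem
      (Submodule.smul_mem _ _ (Submodule.subset_span (by simp)))
      (Submodule.smul_mem _ _ (Submodule.subset_span (by simp))))
      (Submodule.smul_mem _ _ (Submodule.subset_span (by simp))))
      (Submodule.smul_mem _ _ (Submodule.subset_span (by simp)))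
  have hfix : ∀ x ∈ ΛE, Fmap S μ₀ x = x := by
    intro x hx
    induction hx using Submodule.span_induction with
    | mem g hg =>
        rcases hg with rfl|rfl|rfl|rfl
        · exact Fmap_one S hS1 hSmul hSK hSθ hSθb μ₀ hμ1 hμθ hμθb hμρ hμK hμKθ hμKθb hμKρ
        · exact Fmap_θ S hS1 hSmul hSK hSθ hSθb μ₀ hμ1 hμθ hμθb hμρ hμK hμKθ hμKθb hμKρ
        · exact Fmap_θb S hS1 hSmul hSK hSθ hSθb μ₀ hμ1 hμθ hμθb hμρ hμK hμKθ hμKθb hμKρ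
        · exact Fmap_ρ S hS1 hSmul hSK hSθ hSθb μ₀ hμ1 hμθ hμθb hμρ hμK hμKθ hμKθb hμKρ
    | zero => exact map_zero _
    | add x y hx hy ihx ihy => rw [map_add, ihx, ihy]
    | smul r x hx ihx => rw [map_smul, ihx]
  have hkill : ∀ x ∈ Submodule.span ℝ ({K, K * θ, K * θb, K * ρ} : Set NA),
      Fmap S μ₀ x = 0 := by
    intro x hx
    induction hx using Submodule.span_induction with
    | mem g hg =>
        rcases hg with rfl|rfl|rfl|rfl
        · exact Fmap_K S hS1 hSmul hSK hSθ hSθb μ₀ hμ1 hμθ hμθb hμρ hμK hμKθ hμKθb hμKρ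
        · exact Fmap_Kθ S hS1 hSmul hSK hSθ hSθb μ₀ hμ1 hμθ hμθb hμρ hμK hμKθ hμKθb hμKρ
        · exact Fmap_Kθb S hS1 hSmul hSK hSθ hSθb μ₀ hμ1 hμθ hμθb hμρ hμK hμKθ hμKθb hμKρ
        · exact Fmap_Kρ S hS1 hSmul hSK hSθ hSθb μ₀ hμ1 hμθ hμθb hμρ hμK hμKθ hμKθb hμKρ
    | zero => exact map_zero _
    | add x y hx hy ihx ihy => rw [map_add, ihx, ihy, add_zero]
    | smul r x hx ihx => rw [map_smul, ihx, smul_zero]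
  have hdiff : ∀ x : NA,
      x - Fmap S μ₀ x ∈ Submodule.span ℝ ({K, K * θ, K * θb, K * ρ} : Set NA) := by
    intro x
    have hx : x ∈ Submodule.span ℝ NCset := by rw [span_top]; trivial
    induction hx using Submodule.span_induction with
    | mem g hg =>
        rcases hg with rfl|rfl|rfl|rfl|rfl|rfl|rfl|rfl
        · rw [hfix 1 (Submodule.subset_span (by simp)), sub_self]; exact zero_mem _
        · rw [hfix θ (Submodule.subset_span (by simp)), sub_self]; exact zero_mem _
        · rw [hfix θb (Submodule.subset_span (by simp)), sub_self]; exact zero_mem _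
        · rw [hfix ρ (Submodule.subset_span (by simp)), sub_self]; exact zero_mem _
        · rw [hkill K (Submodule.subset_span (by simp)), sub_zero]
          exact Submodule.subset_span (by simp)
        · rw [hkill (K * θ) (Submodule.subset_span (by simp)), sub_zero]
          exact Submodule.subset_span (by simp)
        · rw [hkill (K * θb) (Submodule.subset_span (by simp)), sub_zero]
          exact Submodule.subset_span (by simp)
        · rw [hkill (K * ρ) (Submodule.subset_span (by simp)), sub_zero]
          exact Submodule.subset_span (by simp)
    | zero => rw [map_zero, sub_zero]; exact zero_mem _
    | add x y hx hy ihx ihy =>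
        have h : (x + y) - Fmap S μ₀ (x + y)
            = (x - Fmap S μ₀ x) + (y - Fmap S μ₀ y) := by rw [map_add]; abel
        rw [h]; exact add_mem ihx ihy
    | smul r x hx ihx =>
        have h : (r • x) - Fmap S μ₀ (r • x) = r • (x - Fmap S μ₀ x) := by
          rw [map_smul, smul_sub]
        rw [h]; exact Submodule.smul_mem _ _ ihx
  have hKmul : ∀ x ∈ ΛE, K * x ∈ Submodule.span ℝ ({K, K * θ, K * θb, K * ρ} : Set NA) := by
    intro x hx
    induction hx using Submodule.span_induction with
    | mem g hg =>
        rcases hg with rfl|rfl|rfl|rfl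
        · rw [mul_one]; exact Submodule.subset_span (by simp)
        · exact Submodule.subset_span (by simp)
        · exact Submodule.subset_span (by simp)
        · exact Submodule.subset_span (by simp)
    | zero => rw [mul_zero]; exact zero_mem _
    | add x y hx hy ihx ihy => rw [mul_add]; exact add_mem ihx ihy
    | smul r x hx ihx => rw [mul_smul_comm]; exact Submodule.smul_mem _ _ ihx
  refine ⟨?_, ?_, ?_, ?_, ?_, ?_⟩
  · intro x
    rw [hF (Pr x), hF x]
    exact hfix _ (hmem x)
  · intro x
    rw [hF x]
    exact (Pr_formula2 S hS1 hSmul hSθ hSθb μ₀ hμ1 hμθ hμθb hμρ hμK hμKθ hμKθb hμKρ x).symm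
  · intro x hx
    rw [hF x]; exact hfix x hx
  · intro x hx
    rw [hF]; exact hkill _ (hKmul x hx)
  · ext y
    constructor
    · rintro ⟨x, rfl⟩
      rw [hF]; exact hmem x
    · intro hy
      exact ⟨y, by rw [hF]; exact hfix y hy⟩
  · ext x
    simp only [Set.mem_setOf_eq, SetLike.mem_coe]
    constructor
    · intro h
      have h2 := hdiff x
      rwa [← hF, h, sub_zero] at h2
    · intro h
      rw [hF]; exact hkill x h
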